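/- For every bounded measurable g : [0,1] → ℝ and every x ∈ [0,1], the identity ∫_{[0,x]} (F_μ(x) − F_μ(y)) g(y) dν(y) = ∫_{[0,x]} ∫_{[0,y]} g(s) dν(s) dμ(y) holds, where μ is an atomless Borel probability measure on [0,1] with distribution function F_μ and ν is a Borel probability measure on [0,1]. -/

import Mathlib

open MeasureTheory Set Filter

/-- Distribution function of a measure on `[0,1]`. -/
noncomputable def Fdist (μ : Measure ℝ) (x : ℝ) : ℝ := (μ (Set.Icc 0 x)).toReal

/-- Pseudo-inverse of the distribution function. -/
noncomputable def Finv (μ : Measure ℝ) (x : ℝ) : ℝ :=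
  sInf {y ∈ Set.Icc (0:ℝ) 1 | x ≤ Fdist μ y}

/-- Topological support of a measure. -/
def msupport (μ : Measure ℝ) : Set ℝ := {x | ∀ U : Set ℝ, IsOpen U → x ∈ U → 0 < μ U}

theorem stmt_13 (μ ν : Measure ℝ) [IsProbabilityMeasure μ] [IsProbabilityMeasure ν]
    [NullSingletonClass μ] (hμc : μ (Set.Icc (0:ℝ) 1)ᶜ = 0) (hνc : ν (Set.Icc (0:ℝ) 1)ᶜ = 0)
    (g : ℝ → ℝ) (hmeas : Measurable g) (C : ℝ) (hbd : ∀ y, |g y| ≤ C) :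
    ∀ x ∈ Set.Icc (0:ℝ) 1,
      ∫ y in Set.Icc 0 x, (Fdist μ x - Fdist μ y) * g y ∂ν =
        ∫ y in Set.Icc 0 x, (∫ t in Set.Icc 0 y, g t ∂ν) ∂μ := by
  intro x hx
  obtain ⟨hx0, hx1⟩ := hx
  -- key fact: for 0 ≤ s ≤ x, μ(Icc s x) = F(x) - F(s)
  have hFd : ∀ s : ℝ, 0 ≤ s → s ≤ x → (μ (Icc s x)).toReal = Fdist μ x - Fdist μ s := by
    intro s hs0 hsx
    have h1 : μ (Icc 0 x) = μ (Icc 0 s) + μ (Ioc s x) := by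
      rw [← measure_union ((Set.Iic_disjoint_Ioc le_rfl).mono Set.Icc_subset_Iic_self le_rfl)
        measurableSet_Ioc, Set.Icc_union_Ioc_eq_Icc hs0 hsx]
    have h2 : μ (Ioc s x) = μ (Icc s x) :=
      measure_congr (Ioc_ae_eq_Icc (μ := μ))
    simp only [Fdist]
    rw [h1, h2, ENNReal.toReal_add (measure_ne_top μ _) (measure_ne_top μ _)]
    ring
  -- the kernel function
  set F : ℝ × ℝ → ℝ := fun p => (Icc 0 p.1).indicator g p.2 with hFdef
  have hFmeas : Measurable F := by
    have hset : MeasurableSet {q : ℝ × ℝ | 0 ≤ q.2 ∧ q.2 ≤ q.1} :=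
      (measurableSet_le measurable_const measurable_snd).inter
        (measurableSet_le measurable_snd measurable_fst)
    have : F = {q : ℝ × ℝ | 0 ≤ q.2 ∧ q.2 ≤ q.1}.indicator (fun q => g q.2) := by
      ext p
      by_cases h : p.2 ∈ Icc 0 p.1 <;>
        simp [F, Set.indicator_apply, Set.mem_Icc] at h ⊢ <;> simp [h]
    rw [this]
    exact (hmeas.comp measurable_snd).indicator hset
  -- integrability on the product
  have hInt : Integrable (Function.uncurry fun y s => F (y, s))
      ((μ.restrict (Icc 0 x)).prod (ν.restrict (Icc 0 x))) := by
    have hC : ∀ p : ℝ × ℝ, ‖F p‖ ≤ C := by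
      intro p
      have h1 : ‖(Icc (0:ℝ) p.1).indicator g p.2‖ ≤ ‖g p.2‖ := norm_indicator_le_norm_self g p.2
      exact h1.trans (by rw [Real.norm_eq_abs]; exact hbd p.2)
    exact (integrable_const C).mono' hFmeas.aestronglyMeasurable
      (ae_of_all _ fun p => hC p)
  -- rewrite RHS as a double integral
  have hRHS : ∫ y in Icc 0 x, (∫ t in Icc 0 y, g t ∂ν) ∂μ
      = ∫ y in Icc 0 x, ∫ s in Icc 0 x, F (y, s) ∂ν ∂μ := by
    apply setIntegral_congr_fun measurableSet_Icc
    intro t ht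
    simp only [F]
    rw [setIntegral_indicator measurableSet_Icc, Set.Icc_inter_Icc]
    simp [min_eq_right ht.2]
  rw [hRHS, integral_integral_swap hInt]
  apply setIntegral_congr_fun measurableSet_Icc
  intro s hs
  have hs0 : (0:ℝ) ≤ s := hs.1
  have hsx : s ≤ x := hs.2
  have hFs : ∀ t, F (t, s) = (Ici s).indicator (fun _ => g s) t := by
    intro t
    simp only [F, Set.indicator_apply, Set.mem_Icc, Set.mem_Ici]
    by_cases h : s ≤ t <;> simp [h, hs0]
  calc (Fdist μ x - Fdist μ s) * g s
      = (μ (Icc s x)).toReal * g s := by rw [hFd s hs0 hsx]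
    _ = ∫ t in Icc 0 x, (Ici s).indicator (fun _ => g s) t ∂μ := by
        have hset : Icc 0 x ∩ Ici s = Icc s x := by
          ext t
          simp only [Set.mem_inter_iff, Set.mem_Icc, Set.mem_Ici]
          constructor
          · rintro ⟨⟨_, h2⟩, h3⟩; exact ⟨h3, h2⟩
          · rintro ⟨h1, h2⟩; exact ⟨⟨hs0.trans h1, h2⟩, h1⟩
        rw [setIntegral_indicator measurableSet_Ici, setIntegral_const, hset, smul_eq_mul, Measure.real]
    _ = ∫ t in Icc 0 x, F (t, s) ∂μ := by
        apply setIntegral_congr_fun measurableSet_Icc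
        intro t _
        exact (hFs t).symm
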